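/- If α σ β in I^cf_λ, where σ is the least group congruence, then d̄(α) − r̄(α) = d̄(β) − r̄(β) in the integers. -/

import Mathlib

open Function Set

namespace IcfPaper

variable {ι : Type*}

lemma trans_none_finite {f g : ι ≃. ι}
    (hf : {a | f a = none}.Finite) (hg : {b | g b = none}.Finite) :
    {a | (f.trans g) a = none}.Finite := by
  have hsub : {a | (f.trans g) a = none} ⊆
      {a | f a = none} ∪ ⋃ b ∈ {b | g b = none}, {a | f.symm b = some a} := by
    intro a ha
    simp only [Set.mem_setOf_eq] at ha
    rcases hfa : f a with _ | b
    · exact Or.inl hfa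
    · have hg' : g b = none := by
        have : (f.trans g) a = (f a).bind g := rfl
        rw [this, hfa] at ha
        exact ha
      refine Or.inr ?_
      refine Set.mem_biUnion hg' ?_
      exact (PEquiv.eq_some_iff f).2 hfa
  refine Set.Finite.subset (hf.union (hg.biUnion ?_)) hsub
  intro b _
  apply Set.Subsingleton.finite
  intro a1 h1 a2 h2
  simp only [Set.mem_setOf_eq] at h1 h2
  rw [h1] at h2
  exact Option.some_injective _ h2

/-- The monoid of injective partial selfmaps of `ι` with cofinite domain and range. -/
def Icf (ι : Type*) : Type _ :=
  {f : ι ≃. ι // {a | f a = none}.Finite ∧ {b | f.symm b = none}.Finite}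

namespace Icf

instance : Monoid (Icf ι) where
  mul f g := ⟨f.1.trans g.1, trans_none_finite f.2.1 g.2.1, by
      rw [PEquiv.symm_trans_rev]
      exact trans_none_finite g.2.2 f.2.2⟩
  one := ⟨PEquiv.refl ι, by
      constructor <;>
      · convert Set.finite_empty
        ext a
        simp only [Set.mem_setOf_eq, Set.mem_empty_iff_false, iff_false]
        intro h
        exact Option.some_ne_none _ h⟩
  mul_assoc a b c := Subtype.ext (PEquiv.trans_assoc _ _ _)
  one_mul a := Subtype.ext (PEquiv.refl_trans _)
  mul_one a := Subtype.ext (PEquiv.trans_refl _)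

/-- The domain of an element of `Icf ι`. -/
def dom (f : Icf ι) : Set ι := {a | (f.1 a).isSome}

/-- The range of an element of `Icf ι`. -/
def ran (f : Icf ι) : Set ι := {b | (f.1.symm b).isSome}

/-- `d̄ f`, the number of points of `ι` outside of the domain of `f`. -/
noncomputable def dbar (f : Icf ι) : ℕ := (dom f)ᶜ.ncard

/-- `r̄ f`, the number of points of `ι` outside of the range of `f`. -/
noncomputable def rbar (f : Icf ι) : ℕ := (ran f)ᶜ.ncard

end Icf

/-- The bicyclic semigroup `⟨p, q | pq = 1⟩`, realized as `ℕ × ℕ` with the operation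
`(a,b)(c,d) = (a - b + max(b,c), d - c + max(b,c))`. -/
def Bicyclic : Type := ℕ × ℕ

instance : Mul Bicyclic :=
  ⟨fun x y => (x.1 - x.2 + max x.2 y.1, y.2 - y.1 + max x.2 y.1)⟩



lemma dom_compl_eq (f : Icf ι) : (Icf.dom f)ᶜ = {a | f.1 a = none} := by
  ext a; simp [Icf.dom, Option.not_isSome_iff_eq_none]

lemma ran_compl_eq (f : Icf ι) : (Icf.ran f)ᶜ = {b | f.1.symm b = none} := by
  ext b; simp [Icf.ran, Option.not_isSome_iff_eq_none]

lemma trans_none_ncard [Nonempty ι] (f g : ι ≃. ι)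
    (hf : {a | f a = none}.Finite) (hfs : {b | f.symm b = none}.Finite)
    (hg : {a | g a = none}.Finite) :
    {a | (f.trans g) a = none}.ncard =
      {a | f a = none}.ncard + ({b | g b = none} \ {b | f.symm b = none}).ncard := by
  classical
  set A := {a | f a = none}
  set E := {a : ι | ∃ b, f a = some b ∧ g b = none} with hE
  set ψ : ι → ι := fun a => (f a).getD (Classical.arbitrary ι) with hψ
  have hset : {a | (f.trans g) a = none} = A ∪ E := by
    ext a
    simp only [Set.mem_setOf_eq, Set.mem_union, A, E]
    have : (f.trans g) a = (f a).bind g := rfl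
    rw [this]
    rcases hfa : f a with _ | b
    · simp
    · simp [hfa]
  have hbij : Set.BijOn ψ E ({b | g b = none} \ {b | f.symm b = none}) := by
    refine ⟨?_, ?_, ?_⟩
    · rintro a ⟨b, hab, hgb⟩
      have : ψ a = b := by simp [hψ, hab]
      rw [this]
      refine ⟨hgb, ?_⟩
      have := (PEquiv.eq_some_iff f).2 hab
      simp [this]
    · rintro a1 ⟨b1, hab1, _⟩ a2 ⟨b2, hab2, _⟩ hps
      have h1 : ψ a1 = b1 := by simp [hψ, hab1]
      have h2 : ψ a2 = b2 := by simp [hψ, hab2]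
      rw [h1, h2] at hps
      subst hps
      have e1 := (PEquiv.eq_some_iff f).2 hab1
      have e2 := (PEquiv.eq_some_iff f).2 hab2
      rw [e1] at e2
      exact (Option.some_injective _ e2.symm).symm
    · rintro b ⟨hgb, hb⟩
      simp only [Set.mem_setOf_eq] at hgb hb
      rcases hsb : f.symm b with _ | a
      · exact absurd hsb hb
      · have hab : f a = some b := (PEquiv.eq_some_iff f).1 hsb
        exact ⟨a, ⟨b, hab, hgb⟩, by simp [hψ, hab]⟩
  have hCB : ({b | g b = none} \ {b | f.symm b = none}).Finite := hg.diff
  have hEfin : E.Finite := by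
    rw [← hbij.image_eq] at hCB
    exact Set.Finite.of_finite_image hCB hbij.injOn
  have hdisj : Disjoint A E := by
    rw [Set.disjoint_left]
    rintro a ha ⟨b, hab, _⟩
    rw [Set.mem_setOf_eq] at ha
    rw [ha] at hab
    exact Option.some_ne_none _ hab.symm
  rw [hset, Set.ncard_union_eq hdisj hf hEfin, ← hbij.image_eq,
    Set.ncard_image_of_injOn hbij.injOn]

lemma index_mul [Nonempty ι] (f g : Icf ι) :
    Icf.dbar (f * g) + Icf.rbar f + Icf.rbar g
      = Icf.rbar (f * g) + Icf.dbar f + Icf.dbar g := by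
  classical
  have hmul : (f * g).1 = f.1.trans g.1 := rfl
  set A := {a | f.1 a = none}
  set B := {b | f.1.symm b = none}
  set C := {a | g.1 a = none}
  set D := {b | g.1.symm b = none}
  have hA : A.Finite := f.2.1
  have hB : B.Finite := f.2.2
  have hC : C.Finite := g.2.1
  have hD : D.Finite := g.2.2
  have hd : Icf.dbar (f * g) = A.ncard + (C \ B).ncard := by
    rw [Icf.dbar, dom_compl_eq, hmul]
    exact trans_none_ncard f.1 g.1 hA hB hC
  have hr : Icf.rbar (f * g) = D.ncard + (B \ C).ncard := by
    rw [Icf.rbar, ran_compl_eq, hmul, PEquiv.symm_trans_rev]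
    have := trans_none_ncard g.1.symm f.1.symm hD (by simpa using hC) hB
    simpa using this
  have hdf : Icf.dbar f = A.ncard := by rw [Icf.dbar, dom_compl_eq]
  have hrf : Icf.rbar f = B.ncard := by rw [Icf.rbar, ran_compl_eq]
  have hdg : Icf.dbar g = C.ncard := by rw [Icf.dbar, dom_compl_eq]
  have hrg : Icf.rbar g = D.ncard := by rw [Icf.rbar, ran_compl_eq]
  rw [hd, hr, hdf, hrf, hdg, hrg]
  have h1 : (C \ B).ncard + B.ncard = (C ∪ B).ncard := Set.ncard_diff_add_ncard C B hC hB
  have h2 : (B \ C).ncard + C.ncard = (B ∪ C).ncard := Set.ncard_diff_add_ncard B C hB hC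
  rw [Set.union_comm] at h2
  omega

/-- If `α σ β` (with `σ` the least group congruence of the inverse semigroup `Icf ι`,
i.e. `α·e = β·e` for some idempotent `e`), then `d̄(α) − r̄(α) = d̄(β) − r̄(β)`. -/
theorem statement16 {ι : Type*} [Infinite ι] (α β : Icf ι)
    (h : ∃ e : Icf ι, e * e = e ∧ α * e = β * e) :
    (Icf.dbar α : ℤ) - (Icf.rbar α : ℤ) = (Icf.dbar β : ℤ) - (Icf.rbar β : ℤ) := by
  obtain ⟨e, -, heq⟩ := h
  have h1 := index_mul α e
  have h2 := index_mul β e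
  rw [heq] at h1
  omega

end IcfPaper
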